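/- For any finite alphabet A with |A| ≥ 2 and any n ≥ 1, there exists a cyclic universal word for A^n, i.e., a cyclic word of length |A|^n over A in which every word of length n over A appears exactly once as a cyclic subword. -/

import Mathlib

namespace DBX

/-- A walk in the De Bruijn graph with `m = α^p` vertices (numbers `< m`) and
edges numbers `< m*α`; edge `e` goes from `e / α` to `e % m`. -/
def Walks (α m : ℕ) : ℕ → List ℕ → ℕ → Prop
  | v, [], w => v = w
  | v, e :: es, w => e / α = v ∧ Walks α m (e % m) es w

@[simp] theorem walks_nil {α m v w : ℕ} : Walks α m v [] w ↔ v = w := Iff.rfl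

@[simp] theorem walks_cons {α m v w e : ℕ} {es : List ℕ} :
    Walks α m v (e :: es) w ↔ e / α = v ∧ Walks α m (e % m) es w := Iff.rfl

theorem walks_append {α m v u w : ℕ} {l₁ l₂ : List ℕ}
    (h₁ : Walks α m v l₁ u) (h₂ : Walks α m u l₂ w) : Walks α m v (l₁ ++ l₂) w := by
  induction l₁ generalizing v with
  | nil => simpa [Walks] using h₁ ▸ h₂
  | cons e es ih => exact ⟨h₁.1, ih h₁.2⟩

theorem walks_append_split {α m v w : ℕ} {l₁ l₂ : List ℕ}
    (h : Walks α m v (l₁ ++ l₂) w) : ∃ u, Walks α m v l₁ u ∧ Walks α m u l₂ w := by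
  induction l₁ generalizing v with
  | nil => exact ⟨v, rfl, h⟩
  | cons e es ih =>
      obtain ⟨u, h1, h2⟩ := ih h.2
      exact ⟨u, ⟨h.1, h1⟩, h2⟩

theorem walks_balance {α m v w : ℕ} {es : List ℕ} (h : Walks α m v es w) (x : ℕ) :
    es.countP (fun e => e % m = x) + (if v = x then 1 else 0)
      = es.countP (fun e => e / α = x) + (if w = x then 1 else 0) := by
  induction es generalizing v with
  | nil => simp [Walks] at h; subst h; rfl
  | cons e es ih =>
      have := ih h.2
      simp only [List.countP_cons, decide_eq_true_eq]
      rw [← h.1] at *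
      split_ifs at * <;> omega

theorem walks_end_lt {α m v w : ℕ} {es : List ℕ} (h : Walks α m v es w)
    (hv : v < m) (hm : 0 < m) : w < m := by
  induction es generalizing v with
  | nil => simp [Walks] at h; omega
  | cons e es ih => exact ih h.2 (Nat.mod_lt _ hm)

theorem walks_tgt_mem {α m v w : ℕ} {es : List ℕ} (h : Walks α m v es w) {e : ℕ}
    (he : e ∈ es) : e % m = w ∨ ∃ e' ∈ es, e' / α = e % m := by
  induction es generalizing v with
  | nil => simp at he
  | cons f fs ih =>
      rcases List.mem_cons.mp he with he | he
      · subst he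
        rcases fs with _ | ⟨g, gs⟩
        · exact Or.inl h.2
        · exact Or.inr ⟨g, by simp, h.2.1⟩
      · rcases ih h.2 he with h' | ⟨e', he', h''⟩ 
        · exact Or.inl h'
        · exact Or.inr ⟨e', by simp [he'], h''⟩

theorem nodup_bounded_length_le {M : ℕ} {es : List ℕ} (hnd : es.Nodup)
    (hb : ∀ e ∈ es, e < M) : es.length ≤ M := by
  have h1 : es.Subperm (List.range M) :=
    List.subperm_of_subset hnd (fun e he => List.mem_range.mpr (hb e he))
  simpa using h1.length_le

theorem nodup_bounded_full {M : ℕ} {es : List ℕ} (hnd : es.Nodup)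
    (hb : ∀ e ∈ es, e < M) (hlen : M ≤ es.length) : ∀ t < M, t ∈ es := by
  have h2 : es.Subperm (List.range M) :=
    List.subperm_of_subset hnd (fun e he => List.mem_range.mpr (hb e he))
  have h4 : List.Perm es (List.range M) := h2.perm_of_length_le (by simpa using hlen)
  exact fun t ht => h4.symm.subset (List.mem_range.mpr ht)

theorem exists_unused {M : ℕ} {es : List ℕ} (hnd : es.Nodup)
    (hb : ∀ e ∈ es, e < M) (hlen : es.length < M) : ∃ f, f < M ∧ f ∉ es := by
  by_contra hcon
  push_neg at hcon
  have h1 : (List.range M).Subperm es :=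
    List.subperm_of_subset (List.nodup_range : (List.range M).Nodup) (fun f hf => hcon f (List.mem_range.mp hf))
  have := h1.length_le
  simp at this; omega



theorem countP_src_le {α m M w : ℕ} (hα : 0 < α) (hM : M = m * α) {L : List ℕ}
    (hnd : L.Nodup) (hb : ∀ e ∈ L, e < M) :
    L.countP (fun e => e / α = w) ≤ α := by
  classical
  set O : List ℕ := (List.range α).map (fun a => w * α + a) with hO
  have hOnd : O.Nodup := (List.nodup_range : (List.range α).Nodup).map (fun a b h => by omega)
  have hsub : (L.filter (fun e => e / α = w)) ⊆ O := by
    intro e he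
    rw [List.mem_filter] at he
    have h1 : e / α = w := by simpa using he.2
    have h2 : e < M := hb e he.1
    rw [hO, List.mem_map]
    have h3 : e % α + e / α * α = e := Nat.mod_add_div' e α
    rw [h1] at h3
    exact ⟨e % α, List.mem_range.mpr (Nat.mod_lt _ hα), by omega⟩
  have := (List.subperm_of_subset (hnd.filter _) hsub).length_le
  rw [List.countP_eq_length_filter]
  simpa [hO] using this

theorem countP_src_ge {α m M w : ℕ} (hα : 0 < α) (hM : M = m * α) (hw : w < m) {L : List ℕ}
    (hnd : L.Nodup) (hfull : ∀ f, f < M → f / α = w → f ∈ L) :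
    α ≤ L.countP (fun e => e / α = w) := by
  classical
  set O : List ℕ := (List.range α).map (fun a => w * α + a) with hO
  have hOnd : O.Nodup := (List.nodup_range : (List.range α).Nodup).map (fun a b h => by omega)
  have hsub : O ⊆ L.filter (fun e => e / α = w) := by
    intro o ho
    rw [hO, List.mem_map] at ho
    obtain ⟨a, ha, rfl⟩ := ho
    rw [List.mem_range] at ha
    have h1 : (w * α + a) / α = w := by
      rw [add_comm, Nat.add_mul_div_right _ _ hα, Nat.div_eq_of_lt ha, Nat.zero_add]
    have h2 : w * α + a < M := by
      have h4 : (w + 1) * α ≤ m * α := Nat.mul_le_mul_right _ (by omega)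
      have h5 : (w + 1) * α = w * α + α := by ring
      omega
    rw [List.mem_filter]
    exact ⟨hfull _ h2 h1, by simpa using h1⟩
  have := (List.subperm_of_subset hOnd hsub).length_le
  rw [List.countP_eq_length_filter]
  simpa [hO] using this

theorem countP_tgt_le {α m M w : ℕ} (hm : 0 < m) (hM : M = m * α) {L : List ℕ}
    (hnd : L.Nodup) (hb : ∀ e ∈ L, e < M) :
    L.countP (fun e => e % m = w) ≤ α := by
  classical
  set I : List ℕ := (List.range α).map (fun b => b * m + w) with hI
  have hInd : I.Nodup := (List.nodup_range : (List.range α).Nodup).map (fun a b h => by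
    have := Nat.eq_of_mul_eq_mul_right hm (by omega : a * m = b * m); omega)
  have hsub : (L.filter (fun e => e % m = w)) ⊆ I := by
    intro e he
    rw [List.mem_filter] at he
    have h1 : e % m = w := by simpa using he.2
    have h2 : e < M := hb e he.1
    rw [hI, List.mem_map]
    refine ⟨e / m, List.mem_range.mpr ?_, ?_⟩
    · rw [hM] at h2; exact Nat.div_lt_of_lt_mul h2
    · have h3 : e % m + e / m * m = e := Nat.mod_add_div' e m
      rw [h1] at h3; omega
  have := (List.subperm_of_subset (hnd.filter _) hsub).length_le
  rw [List.countP_eq_length_filter]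
  simpa [hI] using this


theorem closed_countP_eq {α m v : ℕ} {es : List ℕ} (h : Walks α m v es v) (x : ℕ) :
    es.countP (fun e => e % m = x) = es.countP (fun e => e / α = x) := by
  have := walks_balance h x
  omega

theorem noext_closed {α m M v x w : ℕ} (hα : 0 < α) (hM : M = m * α)
    (hx : x < m) (hw : w < m) {es S : List ℕ}
    (hes : Walks α m v es v) (hesnd : es.Nodup) (hesb : ∀ e ∈ es, e < M)
    (hS : Walks α m x S w) (hSnd : S.Nodup) (hSb : ∀ e ∈ S, e < M)
    (hdisj : ∀ e ∈ S, e ∉ es)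
    (hfull : ∀ f, f < M → f / α = w → f ∈ es ∨ f ∈ S) : w = x := by
  classical
  set L : List ℕ := es ++ S with hL
  have hLnd : L.Nodup := by
    rw [hL, List.nodup_append]
    exact ⟨hesnd, hSnd, fun a ha b hb hab => by subst hab; exact hdisj a hb ha⟩
  have hLb : ∀ e ∈ L, e < M := by
    intro e he; rw [hL, List.mem_append] at he
    rcases he with h1 | h1
    · exact hesb e h1
    · exact hSb e h1
  have h1 : α ≤ L.countP (fun e => e / α = w) :=
    countP_src_ge hα hM hw hLnd (fun f hf1 hf2 => by
      rw [hL, List.mem_append]; exact hfull f hf1 hf2)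
  have h2 : L.countP (fun e => e % m = w) ≤ α := countP_tgt_le (by omega) hM hLnd hLb
  have h3 := closed_countP_eq hes w
  have h4 := walks_balance hS w
  rw [hL, List.countP_append] at h1
  rw [hL, List.countP_append] at h2
  by_contra hne
  rw [if_neg (Ne.symm hne), if_pos rfl] at h4
  omega

theorem extend_to_closed {α m M : ℕ} (hα : 0 < α) (hM : M = m * α) {v : ℕ}
    {es : List ℕ} (hes : Walks α m v es v) (hesnd : es.Nodup) (hesb : ∀ e ∈ es, e < M) :
    ∀ (k : ℕ) (S : List ℕ) (w x : ℕ), x < m → Walks α m x S w → S.Nodup →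
      (∀ e ∈ S, e < M) → (∀ e ∈ S, e ∉ es) → M ≤ S.length + es.length + k →
      ∃ S', Walks α m x S' x ∧ S'.Nodup ∧ (∀ e ∈ S', e < M) ∧
        (∀ e ∈ S', e ∉ es) ∧ S.length ≤ S'.length := by
  intro k
  induction k with
  | zero =>
      intro S w x hx hS hSnd hSb hdisj hlen
      by_cases hext : ∃ f, f < M ∧ f / α = w ∧ f ∉ es ∧ f ∉ S
      · exfalso
        obtain ⟨f, hf1, hf2, hf3, hf4⟩ := hext
        have hnd2 : (f :: (S ++ es)).Nodup := by
          rw [List.nodup_cons, List.nodup_append]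
          refine ⟨by simp [hf3, hf4], hSnd, hesnd, fun a ha b hb hab => by subst hab; exact hdisj a ha hb⟩
        have hb2 : ∀ e ∈ f :: (S ++ es), e < M := by
          intro e he
          rcases List.mem_cons.mp he with rfl | he
          · exact hf1
          · rcases List.mem_append.mp he with h | h
            · exact hSb e h
            · exact hesb e h
        have := nodup_bounded_length_le hnd2 hb2
        simp at this; omega
      · push_neg at hext
        have hw : w < m := walks_end_lt hS hx (by omega)
        have hcl : w = x := noext_closed hα hM hx hw hes hesnd hesb hS hSnd hSb hdisj
          (fun f h1 h2 => by
            by_cases h3 : f ∈ es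
            · exact Or.inl h3
            · exact Or.inr (by by_contra h4; exact h4 (hext f h1 h2 h3)))
        exact ⟨S, hcl ▸ hS, hSnd, hSb, hdisj, le_refl _⟩
  | succ k ih =>
      intro S w x hx hS hSnd hSb hdisj hlen
      by_cases hext : ∃ f, f < M ∧ f / α = w ∧ f ∉ es ∧ f ∉ S
      · obtain ⟨f, hf1, hf2, hf3, hf4⟩ := hext
        have hS' : Walks α m x (S ++ [f]) (f % m) :=
          walks_append hS ⟨hf2, rfl⟩
        have hnd' : (S ++ [f]).Nodup := by
          rw [List.nodup_append]; exact ⟨hSnd, List.nodup_singleton f, by intro a ha b hb hab; simp at hb; subst hb; subst hab; exact hf4 ha⟩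
        have hb' : ∀ e ∈ S ++ [f], e < M := by
          intro e he
          rcases List.mem_append.mp he with h | h
          · exact hSb e h
          · simp at h; omega
        have hdisj' : ∀ e ∈ S ++ [f], e ∉ es := by
          intro e he
          rcases List.mem_append.mp he with h | h
          · exact hdisj e h
          · simp at h; subst h; exact hf3
        obtain ⟨S', h1, h2, h3, h4, h5⟩ := ih (S ++ [f]) (f % m) x hx hS' hnd' hb' hdisj'
          (by simp only [List.length_append, List.length_singleton]; omega)
        refine ⟨S', h1, h2, h3, h4, by simp at h5; omega⟩
      · push_neg at hext
        have hw : w < m := walks_end_lt hS hx (by omega)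
        have hcl : w = x := noext_closed hα hM hx hw hes hesnd hesb hS hSnd hSb hdisj
          (fun f h1 h2 => by
            by_cases h3 : f ∈ es
            · exact Or.inl h3
            · exact Or.inr (by by_contra h4; exact h4 (hext f h1 h2 h3)))
        exact ⟨S, hcl ▸ hS, hSnd, hSb, hdisj, le_refl _⟩

theorem walks_rotate {α m v e : ℕ} {es : List ℕ} (h : Walks α m v es v) (he : e ∈ es) :
    ∃ es', List.Perm es' es ∧ Walks α m (e / α) es' (e / α) := by
  obtain ⟨l₁, l₂, rfl⟩ := List.append_of_mem he
  obtain ⟨u, h1, h2⟩ := walks_append_split h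
  have h3 : e / α = u := h2.1
  refine ⟨(e :: l₂) ++ l₁, ?_, ?_⟩
  · exact List.perm_append_comm
  · exact walks_append (h3 ▸ h2) (h3 ▸ h1)


theorem walks_reach {α p : ℕ} (hα : 0 < α) :
    ∀ (k c : ℕ), c < α ^ k → ∀ y, y < α ^ p →
      ∃ q, (∀ e ∈ q, e < α ^ (p + 1)) ∧ Walks α (α ^ p) y q ((y * α ^ k + c) % α ^ p) := by
  intro k
  induction k with
  | zero =>
      intro c hc y hy
      rw [pow_zero, Nat.lt_one_iff] at hc
      subst hc
      refine ⟨[], by simp, ?_⟩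
      simp [Walks, Nat.mod_eq_of_lt hy]
  | succ k ih =>
      intro c hc y hy
      set a := c / α ^ k with haa
      set c' := c % α ^ k with hcc
      have hpk : 0 < α ^ k := Nat.pow_pos hα
      have ha : a < α := by
        rw [haa]
        apply Nat.div_lt_of_lt_mul
        calc c < α ^ (k + 1) := hc
        _ = α ^ k * α := pow_succ α k
      set e := y * α + a with hee
      have he : e < α ^ (p + 1) := by
        have h1 : (y + 1) * α ≤ α ^ p * α := Nat.mul_le_mul_right _ (by omega)
        have h2 : (y + 1) * α = y * α + α := by ring
        have h3 : α ^ (p + 1) = α ^ p * α := pow_succ α p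
        omega
      have hy' : e % α ^ p < α ^ p := Nat.mod_lt _ (Nat.pow_pos hα)
      obtain ⟨q, hqb, hq⟩ := ih c' (Nat.mod_lt _ hpk) (e % α ^ p) hy'
      refine ⟨e :: q, ?_, ?_, ?_⟩
      · intro f hf
        rcases List.mem_cons.mp hf with rfl | hf
        · exact he
        · exact hqb f hf
      · rw [hee, add_comm, Nat.add_mul_div_right _ _ hα, Nat.div_eq_of_lt ha, Nat.zero_add]
      · have hmod : (e % α ^ p * α ^ k + c') % α ^ p = (y * α ^ (k + 1) + c) % α ^ p := by
          have h1 : (e % α ^ p) ≡ e [MOD α ^ p] := Nat.mod_modEq e (α ^ p)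
          have h2 : (e % α ^ p) * α ^ k + c' ≡ e * α ^ k + c' [MOD α ^ p] :=
            (h1.mul_right _).add_right _
          have h3 : e * α ^ k + c' = y * α ^ (k + 1) + (a * α ^ k + c') := by
            rw [hee]; ring
          have h4 : a * α ^ k + c' = c := by
            rw [haa, hcc, mul_comm]; exact Nat.div_add_mod c (α ^ k)
          rw [h3, h4] at h2
          exact h2
        rw [← hmod]
        exact hq

theorem closed_src_mem {α m v : ℕ} {es : List ℕ} (hes : Walks α m v es v)
    (hne : es ≠ []) : ∃ e ∈ es, e / α = v := by
  rcases es with _ | ⟨e, es'⟩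
  · exact absurd rfl hne
  · exact ⟨e, by simp, hes.1⟩

theorem first_exit {α m v t : ℕ} {es : List ℕ} (hes : Walks α m v es v) (hne : es ≠ [])
    (ht : ∀ e ∈ es, e / α ≠ t) :
    ∀ (q : List ℕ) (y : ℕ), Walks α m y q t → (∃ e ∈ es, e / α = y) →
      ∃ g ∈ q, g ∉ es ∧ ∃ e ∈ es, e / α = g / α := by
  intro q
  induction q with
  | nil =>
      intro y hq hy
      obtain ⟨e, he, hey⟩ := hy
      rw [walks_nil] at hq
      exact absurd (hq ▸ hey) (ht e he)
  | cons g q' ih =>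
      intro y hq hy
      by_cases hg : g ∈ es
      · rcases walks_tgt_mem hes hg with h1 | h1
        · have hvV : ∃ e ∈ es, e / α = v := closed_src_mem hes hne
          obtain ⟨g', hg1, hg2, hg3⟩ := ih (g % m) hq.2 (h1 ▸ hvV)
          exact ⟨g', by simp [hg1], hg2, hg3⟩
        · obtain ⟨g', hg1, hg2, hg3⟩ := ih (g % m) hq.2 h1
          exact ⟨g', by simp [hg1], hg2, hg3⟩
      · exact ⟨g, by simp, hg, hq.1 ▸ hy⟩

theorem grow {α p v : ℕ} (hα : 0 < α) {es : List ℕ} (hv : v < α ^ p)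
    (hes : Walks α (α ^ p) v es v) (hnd : es.Nodup) (hb : ∀ e ∈ es, e < α ^ (p + 1))
    (hlen : es.length < α ^ (p + 1)) :
    ∃ (v' : ℕ) (es' : List ℕ), v' < α ^ p ∧ Walks α (α ^ p) v' es' v' ∧ es'.Nodup ∧
      (∀ e ∈ es', e < α ^ (p + 1)) ∧ es.length < es'.length := by
  classical
  set m := α ^ p with hm
  set M := α ^ (p + 1) with hMe
  have hM : M = m * α := pow_succ α p
  obtain ⟨f0, hf0M, hf0⟩ := exists_unused hnd hb hlen
  have hsplit : ∃ g, g < M ∧ g ∉ es ∧ ((es = [] ∧ g / α < m) ∨ ∃ e ∈ es, e / α = g / α) := by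
    rcases eq_or_ne es [] with rfl | hne
    · refine ⟨f0, hf0M, hf0, Or.inl ⟨rfl, ?_⟩⟩
      exact Nat.div_lt_of_lt_mul (by rw [mul_comm α m, ← hM]; exact hf0M)
    · by_cases hv0 : ∃ e ∈ es, e / α = f0 / α
      · exact ⟨f0, hf0M, hf0, Or.inr hv0⟩
      · push_neg at hv0
        set t := f0 / α with hte
        have htm : t < m := Nat.div_lt_of_lt_mul (by rw [mul_comm α m, ← hM]; exact hf0M)
        obtain ⟨q, hqb, hq⟩ := walks_reach (p := p) hα p t htm v hv
        have htgt : (v * α ^ p + t) % α ^ p = t := by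
          rw [mul_comm, Nat.mul_add_mod]
          exact Nat.mod_eq_of_lt htm
        rw [htgt] at hq
        obtain ⟨g, hgq, hg1, hg2⟩ := first_exit hes hne hv0 q v hq (closed_src_mem hes hne)
        exact ⟨g, hqb g hgq, hg1, Or.inr hg2⟩
  obtain ⟨g, hgM, hges, hcase⟩ := hsplit
  rcases hcase with ⟨rfl, hx⟩ | ⟨e0, he0, he0g⟩
  · -- es empty: start fresh closed trail from g / α
    set x := g / α with hxe
    have hx' : Walks α m x [g] (g % m) := ⟨rfl, rfl⟩
    obtain ⟨S', h1, h2, h3, h4, h5⟩ :=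
      extend_to_closed (v := x) (es := ([] : List ℕ)) hα hM rfl (List.nodup_nil)
        (by simp) M [g] (g % m) x hx hx' (List.nodup_singleton g)
        (by simpa using hgM) (by simp) (by simp)
    exact ⟨x, S', hx, h1, h2, h3, by have := h5; simp only [List.length_nil, List.length_singleton] at this ⊢; omega⟩
  · -- rotate es to start at x := g / α and extend
    set x := g / α with hxe
    have hx : x < m := by
      have h := hb e0 he0
      have h2 : e0 / α < m := Nat.div_lt_of_lt_mul (by rw [mul_comm α m, ← hM]; exact h)
      rw [he0g] at h2; exact h2
    obtain ⟨es'', hperm, hes''⟩ := walks_rotate hes he0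
    rw [he0g] at hes''
    have hnd'' : es''.Nodup := hperm.nodup_iff.mpr hnd
    have hb'' : ∀ e ∈ es'', e < M := fun e he => hb e (hperm.mem_iff.mp he)
    have hges'' : g ∉ es'' := fun h => hges (hperm.mem_iff.mp h)
    have hS : Walks α m x [g] (g % m) := ⟨rfl, rfl⟩
    obtain ⟨S', h1, h2, h3, h4, h5⟩ :=
      extend_to_closed (v := x) hα hM hes'' hnd'' hb'' M [g] (g % m) x hx hS
        (List.nodup_singleton g) (by simpa using hgM) (by simpa using hges'')
        (by simp only [List.length_singleton]; omega)
    refine ⟨x, es'' ++ S', hx, walks_append hes'' h1, ?_, ?_, ?_⟩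
    · rw [List.nodup_append]
      exact ⟨hnd'', h2, fun a ha b hb hab => by subst hab; exact h4 a hb ha⟩
    · intro e he
      rcases List.mem_append.mp he with h | h
      · exact hb'' e h
      · exact h3 e h
    · have hl : es''.length = es.length := hperm.length_eq
      have h5' : 1 ≤ S'.length := by simpa using h5
      simp only [List.length_append]
      omega

theorem euler_exists {α : ℕ} (p : ℕ) (hα : 0 < α) :
    ∃ (v : ℕ) (es : List ℕ), v < α ^ p ∧ Walks α (α ^ p) v es v ∧ es.Nodup ∧
      (∀ e ∈ es, e < α ^ (p + 1)) ∧ es.length = α ^ (p + 1) := by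
  have key : ∀ k, ∃ (v : ℕ) (es : List ℕ), v < α ^ p ∧ Walks α (α ^ p) v es v ∧ es.Nodup ∧
      (∀ e ∈ es, e < α ^ (p + 1)) ∧ min k (α ^ (p + 1)) ≤ es.length := by
    intro k
    induction k with
    | zero =>
        exact ⟨0, [], Nat.pow_pos hα, rfl, List.nodup_nil, by simp, by simp⟩
    | succ k ih =>
        obtain ⟨v, es, h1, h2, h3, h4, h5⟩ := ih
        by_cases h6 : min (k + 1) (α ^ (p + 1)) ≤ es.length
        · exact ⟨v, es, h1, h2, h3, h4, h6⟩
        · push_neg at h6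
          have h7 : es.length < α ^ (p + 1) := lt_of_lt_of_le h6 (min_le_right _ _)
          obtain ⟨v', es', g1, g2, g3, g4, g5⟩ := grow hα h1 h2 h3 h4 h7
          refine ⟨v', es', g1, g2, g3, g4, ?_⟩
          have := min_le_left k (α ^ (p + 1))
          have := min_le_right k (α ^ (p + 1))
          rcases le_or_gt (k + 1) (α ^ (p + 1)) with h | h
          · rw [min_eq_left h] at h6 ⊢
            rw [min_eq_left (by omega)] at h5
            omega
          · rw [min_eq_right (by omega)] at h6
            omega
  obtain ⟨v, es, h1, h2, h3, h4, h5⟩ := key (α ^ (p + 1))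
  rw [min_self] at h5
  exact ⟨v, es, h1, h2, h3, h4,
    le_antisymm (nodup_bounded_length_le h3 h4) h5⟩


theorem walks_head_idx {α m v w : ℕ} {es : List ℕ} (h : Walks α m v es w)
    (hne : 0 < es.length) : es[0]'hne / α = v := by
  rcases es with _ | ⟨e, es'⟩
  · simp at hne
  · exact h.1

theorem walks_chain_idx {α m v w : ℕ} {es : List ℕ} (h : Walks α m v es w) :
    ∀ i (hi : i + 1 < es.length), es[i + 1]'hi / α = es[i]'(by omega) % m := by
  induction es generalizing v with
  | nil => intro i hi; simp at hi
  | cons e es' ih =>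
      intro i hi
      rcases i with _ | i
      · simp only [List.getElem_cons_succ, List.getElem_cons_zero]
        exact walks_head_idx h.2 (by simpa using hi)
      · simp only [List.getElem_cons_succ]
        exact ih h.2 i (by simpa using hi)

theorem walks_last_idx {α m v w : ℕ} {es : List ℕ} (h : Walks α m v es w)
    (hne : 0 < es.length) : es[es.length - 1]'(by omega) % m = w := by
  induction es generalizing v with
  | nil => simp at hne
  | cons e es' ih =>
      rcases es' with _ | ⟨f, es''⟩
      · exact h.2
      · have h2 := ih h.2 (by simp)
        have h3 : (e :: f :: es'').length - 1 = ((f :: es'').length - 1) + 1 := by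
          simp
        simp only [h3, List.getElem_cons_succ]
        exact h2

/-- The cyclic edge sequence associated to the Eulerian circuit. -/
noncomputable def cycE (es : List ℕ) (k : ℕ) : ℕ := es.getD (k % es.length) 0

theorem cycE_eq_getElem {es : List ℕ} {k : ℕ} (h : k < es.length) :
    cycE es k = es[k]'h := by
  rw [cycE, Nat.mod_eq_of_lt h]
  exact List.getD_eq_getElem es 0 h

theorem cycE_lt {es : List ℕ} {M : ℕ} (hb : ∀ e ∈ es, e < M) (hne : 0 < es.length) (k : ℕ) :
    cycE es k < M := by
  have h : k % es.length < es.length := Nat.mod_lt _ hne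
  rw [cycE, List.getD_eq_getElem es 0 h]
  exact hb _ (List.getElem_mem _)

theorem cycE_chain {α m v : ℕ} {es : List ℕ} (h : Walks α m v es v) (hne : 0 < es.length)
    (k : ℕ) : cycE es (k + 1) / α = cycE es k % m := by
  have hk : k % es.length < es.length := Nat.mod_lt _ hne
  have h1 : (k + 1) % es.length = (k % es.length + 1) % es.length := by
    conv_lhs => rw [← Nat.mod_add_mod]
  rw [cycE, cycE, h1, List.getD_eq_getElem es 0 (Nat.mod_lt _ hne),
    List.getD_eq_getElem es 0 hk]
  by_cases h2 : k % es.length + 1 < es.length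
  · simp only [Nat.mod_eq_of_lt h2]
    exact walks_chain_idx h _ h2
  · have h3 : k % es.length + 1 = es.length := by omega
    have h4 : (k % es.length + 1) % es.length = 0 := by rw [h3, Nat.mod_self]
    simp only [h4]
    rw [walks_head_idx h hne]
    have h5 : k % es.length = es.length - 1 := by omega
    rw [← walks_last_idx h hne]
    simp only [h5]

theorem digit_step {α p a b d : ℕ} (hα : 0 < α) (hb : b / α = a % α ^ p)
    (hd1 : 1 ≤ d) (hdp : d ≤ p) :
    b / α ^ d % α = a / α ^ (d - 1) % α := by
  have h1 : α ^ d = α * α ^ (d - 1) := by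
    rw [← pow_succ']
    congr 1
    omega
  have h2 : b / α ^ d = a % α ^ p / α ^ (d - 1) := by
    rw [h1, ← Nat.div_div_eq_div_mul, hb]
  have h3 : α ^ p = α ^ (d - 1) * α ^ (p - d + 1) := by
    rw [← pow_add]
    congr 1
    omega
  rw [h2, h3, Nat.mod_mul_right_div_self]
  exact Nat.mod_mod_of_dvd _ (dvd_pow_self α (by omega))

theorem digit_shift {α m p v : ℕ} (hα : 0 < α) (hm : m = α ^ p) {es : List ℕ}
    (h : Walks α m v es v) (hne : 0 < es.length) :
    ∀ j, j ≤ p → ∀ i, cycE es (i + j) / α ^ p % α = cycE es i / α ^ (p - j) % α := by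
  intro j
  induction j with
  | zero => intro _ i; simp
  | succ j ih =>
      intro hj i
      have h1 : i + (j + 1) = (i + 1) + j := by omega
      rw [h1, ih (by omega) (i + 1)]
      have h2 : cycE es (i + 1) / α = cycE es i % α ^ p := by
        rw [cycE_chain h hne i, hm]
      have := digit_step (a := cycE es i) (b := cycE es (i + 1)) (d := p - j) hα h2
        (by omega) (by omega)
      rw [this]
      congr 2

theorem digits_det {α : ℕ} (hα : 0 < α) :
    ∀ (k x y : ℕ), x < α ^ k → y < α ^ k →
      (∀ c < k, x / α ^ c % α = y / α ^ c % α) → x = y := by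
  intro k
  induction k with
  | zero =>
      intro x y hx hy _
      rw [pow_zero, Nat.lt_one_iff] at hx hy
      omega
  | succ k ih =>
      intro x y hx hy hdig
      have h0 := hdig 0 (by omega)
      simp only [pow_zero, Nat.div_one] at h0
      have hps : α ^ (k + 1) = α * α ^ k := pow_succ' α k
      have hx' : x / α < α ^ k := Nat.div_lt_of_lt_mul (by rw [← hps]; exact hx)
      have hy' : y / α < α ^ k := Nat.div_lt_of_lt_mul (by rw [← hps]; exact hy)
      have hdig' : ∀ c < k, x / α / α ^ c % α = y / α / α ^ c % α := by
        intro c hc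
        have h1 : x / α / α ^ c = x / α ^ (c + 1) := by
          rw [Nat.div_div_eq_div_mul, ← pow_succ']
        have h2 : y / α / α ^ c = y / α ^ (c + 1) := by
          rw [Nat.div_div_eq_div_mul, ← pow_succ']
        rw [h1, h2]
        exact hdig (c + 1) (by omega)
      have heq := ih (x / α) (y / α) hx' hy' hdig'
      have hdx := Nat.div_add_mod x α
      have hdy := Nat.div_add_mod y α
      rw [heq] at hdx
      omega

/-- Base-`α` value of a word, most significant letter first. -/
def enc (α : ℕ) : List (Fin α) → ℕ
  | [] => 0
  | a :: w => a.val * α ^ w.length + enc α w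

theorem enc_lt {α : ℕ} (hα : 0 < α) : ∀ v : List (Fin α), enc α v < α ^ v.length := by
  intro v
  induction v with
  | nil => simp [enc]
  | cons a w ih =>
      have h1 : a.val + 1 ≤ α := a.isLt
      calc enc α (a :: w) = a.val * α ^ w.length + enc α w := rfl
        _ < a.val * α ^ w.length + α ^ w.length := by omega
        _ = (a.val + 1) * α ^ w.length := by ring
        _ ≤ α * α ^ w.length := Nat.mul_le_mul_right _ h1
        _ = α ^ (w.length + 1) := (pow_succ' α w.length).symm
        _ = α ^ (a :: w).length := by simp

theorem enc_digit {α : ℕ} (hα : 0 < α) :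
    ∀ (v : List (Fin α)) (j : ℕ) (hj : j < v.length),
      enc α v / α ^ (v.length - 1 - j) % α = (v[j]'hj).val := by
  intro v
  induction v with
  | nil => intro j hj; simp at hj
  | cons a w ih =>
      intro j hj
      rcases j with _ | j
      · have h1 : (a :: w).length - 1 - 0 = w.length := by simp
        rw [h1]
        show (a.val * α ^ w.length + enc α w) / α ^ w.length % α = a.val
        rw [add_comm, Nat.add_mul_div_right _ _ (Nat.pow_pos hα),
          Nat.div_eq_of_lt (enc_lt hα w), Nat.zero_add, Nat.mod_eq_of_lt a.isLt]
      · have hjw : j < w.length := by simpa using Nat.lt_of_succ_lt_succ hj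
        have h1 : (a :: w).length - 1 - (j + 1) = w.length - 1 - j := by
          simp only [List.length_cons]; omega
        have h2 : α ^ w.length = α ^ (w.length - 1 - j) * α ^ (j + 1) := by
          rw [← pow_add]
          congr 1
          omega
        rw [h1]
        show (a.val * α ^ w.length + enc α w) / α ^ (w.length - 1 - j) % α = _
        have h2' : a.val * α ^ w.length
            = (a.val * α ^ (j + 1)) * α ^ (w.length - 1 - j) := by rw [h2]; ring
        rw [h2', add_comm, Nat.add_mul_div_right _ _ (Nat.pow_pos hα)]
        have h3 : a.val * α ^ (j + 1) = (a.val * α ^ j) * α := by ring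
        rw [h3, Nat.add_mul_mod_self_right, ih j hjw]
        simp


end DBX

/-- `v` appears as a (contiguous) subword of `u` at 0-based position `i`. -/
def WordMatchAt {α : ℕ} (u v : List (Fin α)) (i : ℕ) : Prop :=
  i + v.length ≤ u.length ∧ ∀ j < v.length, u[i + j]? = v[j]?

/-- `u` is a linear universal word for `A^n`, `A = Fin α`: every word of length `n`
appears exactly once as a contiguous subword. -/
def IsLinearUniversal (α n : ℕ) (u : List (Fin α)) : Prop :=
  ∀ v : List (Fin α), v.length = n → ∃! i : ℕ, WordMatchAt u v i

/-- `v` appears as a cyclic subword of `u` starting at position `i` (indices mod `u.length`). -/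
def CycWordMatchAt {α : ℕ} (u v : List (Fin α)) (i : ℕ) : Prop :=
  ∀ j < v.length, u[(i + j) % u.length]? = v[j]?

/-- `u` is a cyclic universal word for `A^n`: every word of length `n` appears exactly once
as a cyclic subword. -/
def IsCyclicUniversal (α n : ℕ) (u : List (Fin α)) : Prop :=
  ∀ v : List (Fin α), v.length = n → ∃! i : ℕ, i < u.length ∧ CycWordMatchAt u v i

/-- For any finite alphabet `A` with `|A| ≥ 2` and any `n ≥ 1`, there exists
a cyclic universal word for `A^n`: a word of length `|A|^n` in which every word of length `n`
appears exactly once as a cyclic subword. -/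
theorem cyclic_universal_word_exists (α n : ℕ) (hα : 2 ≤ α) (hn : 1 ≤ n) :
    ∃ u : List (Fin α), u.length = α ^ n ∧ IsCyclicUniversal α n u := by
  have hα0 : 0 < α := by omega
  obtain ⟨p, rfl⟩ : ∃ p, n = p + 1 := ⟨n - 1, by omega⟩
  obtain ⟨v0, es, hv0, hes, hnd, hb, hlen⟩ := DBX.euler_exists (α := α) p hα0
  have hL : 0 < es.length := by rw [hlen]; exact Nat.pow_pos hα0
  set u : List (Fin α) :=
    es.map (fun e => (⟨e / α ^ p % α, Nat.mod_lt _ hα0⟩ : Fin α)) with hu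
  have hulen : u.length = es.length := by rw [hu, List.length_map]
  refine ⟨u, by rw [hulen, hlen], ?_⟩
  intro w hw
  set N := DBX.enc α w with hN
  have hNM : N < α ^ (p + 1) := by rw [← hw]; exact DBX.enc_lt hα0 w
  have hNmem : N ∈ es := DBX.nodup_bounded_full hnd hb (le_of_eq hlen.symm) N hNM
  obtain ⟨i, hiL, hiN⟩ := List.mem_iff_getElem.mp hNmem
  -- value of the cyclic window entries
  have hval : ∀ (i' : ℕ) (hi' : i' < es.length) (j : ℕ), j ≤ p →
      u[(i' + j) % u.length]?
        = some (⟨es[i']'hi' / α ^ (p - j) % α, Nat.mod_lt _ hα0⟩ : Fin α) := by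
    intro i' hi' j hj
    have hk : (i' + j) % u.length < u.length := Nat.mod_lt _ (by omega)
    have hk' : (i' + j) % es.length < es.length := Nat.mod_lt _ hL
    rw [List.getElem?_eq_getElem hk]
    congr 1
    have h1 : u[(i' + j) % u.length]'hk
        = (⟨es[(i' + j) % es.length]'hk' / α ^ p % α, Nat.mod_lt _ hα0⟩ : Fin α) := by
      simp only [hu, hulen, List.getElem_map, List.length_map]
    rw [h1]
    have h2 : es[(i' + j) % es.length]'hk' = DBX.cycE es (i' + j) := by
      rw [DBX.cycE, List.getD_eq_getElem es 0 hk']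
    have h3 := DBX.digit_shift hα0 rfl hes hL j hj i'
    have h4 : DBX.cycE es i' = es[i']'hi' := DBX.cycE_eq_getElem hi'
    apply Fin.ext
    simp only [h2, h3, h4]
  -- the key characterization
  have key : ∀ (i' : ℕ) (hi' : i' < es.length),
      (CycWordMatchAt u w i' ↔ es[i']'hi' = N) := by
    intro i' hi'
    constructor
    · intro hmatch
      apply DBX.digits_det hα0 (p + 1) _ _ (hb _ (List.getElem_mem hi')) hNM
      intro c hc
      set j := p - c with hj
      have hjp : j ≤ p := by omega
      have hpc : p - j = c := by omega
      have h1 := hmatch j (by omega)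
      rw [hval i' hi' j hjp, List.getElem?_eq_getElem (by omega : j < w.length)] at h1
      have h2 : es[i']'hi' / α ^ (p - j) % α = (w[j]'(by omega)).val := by
        have := congrArg (fun o => (o.map Fin.val).getD 0) h1
        simpa using this
      have h3 : N / α ^ (w.length - 1 - j) % α = (w[j]'(by omega)).val :=
        DBX.enc_digit hα0 w j (by omega)
      have h4 : w.length - 1 - j = c := by omega
      rw [h4] at h3
      rw [hpc] at h2
      rw [h2, h3]
    · intro hval'
      intro j hj
      have hjp : j ≤ p := by omega
      rw [hval i' hi' j hjp, List.getElem?_eq_getElem (by omega : j < w.length)]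
      congr 1
      apply Fin.ext
      have h3 : N / α ^ (w.length - 1 - j) % α = (w[j]'(by omega)).val :=
        DBX.enc_digit hα0 w j (by omega)
      have h4 : w.length - 1 - j = p - j := by omega
      rw [h4] at h3
      simp only [hval', h3]
  refine ⟨i, ⟨by omega, (key i hiL).mpr hiN⟩, ?_⟩
  rintro i'' ⟨h1, h2⟩
  have hi'' : i'' < es.length := by omega
  have h3 : es[i'']'hi'' = es[i]'hiL := by rw [(key i'' hi'').mp h2, hiN]
  exact (hnd.getElem_inj_iff).mp h3
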